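/- Let 0 < r_1 < r_2 < r_3 and let f(α,β) = F_{12}(α) + F_{13}(β) + F_{23}(α−β) where F_{ij}(θ) = (r_i² + r_j² − 2 r_i r_j cos θ)^{−1/2}. Then the determinant of the Hessian of f at (α,β) = (π,0) equals r_1 r_2 r_3 · [r_2(r_3−r_1)³ − r_1(r_3+r_2)³ − r_3(r_1+r_2)³] / [(r_1+r_2)³ (r_2+r_3)³ (r_3−r_1)³]. -/

import Mathlib

noncomputable def Gfun (ri rj : ℝ) : ℝ → ℝ := fun θ =>
  -(ri * rj * Real.sin θ) /
    ((ri^2 + rj^2 - 2 * ri * rj * Real.cos θ) *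
      Real.sqrt (ri^2 + rj^2 - 2 * ri * rj * Real.cos θ))

lemma Dpos (ri rj : ℝ) (hi : 0 < ri) (hj : 0 < rj) (hne : ri ≠ rj) (θ : ℝ) :
    0 < ri^2 + rj^2 - 2 * ri * rj * Real.cos θ := by
  have h2 : 0 < (ri - rj)^2 := by
    have : ri - rj ≠ 0 := sub_ne_zero.2 hne
    positivity
  nlinarith [Real.cos_le_one θ, mul_pos hi hj]

lemma hasDerivAt_F (ri rj : ℝ) (hi : 0 < ri) (hj : 0 < rj) (hne : ri ≠ rj) (θ : ℝ) :
    HasDerivAt (fun t => 1 / Real.sqrt (ri^2 + rj^2 - 2 * ri * rj * Real.cos t))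
      (Gfun ri rj θ) θ := by
  have hD := Dpos ri rj hi hj hne θ
  have hsq : 0 < Real.sqrt (ri^2 + rj^2 - 2 * ri * rj * Real.cos θ) := Real.sqrt_pos.2 hD
  have hD' : HasDerivAt (fun t => ri^2 + rj^2 - 2 * ri * rj * Real.cos t)
      (2 * ri * rj * Real.sin θ) θ := by
    have h1 := (Real.hasDerivAt_cos θ).const_mul (2 * ri * rj)
    have h2 := (hasDerivAt_const θ (ri^2 + rj^2)).sub h1
    refine h2.congr_deriv ?_
    ring
  have hs : HasDerivAt (fun t => Real.sqrt (ri^2 + rj^2 - 2 * ri * rj * Real.cos t))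
      (1 / (2 * Real.sqrt (ri^2 + rj^2 - 2 * ri * rj * Real.cos θ)) * (2 * ri * rj * Real.sin θ)) θ :=
    (Real.hasDerivAt_sqrt hD.ne').comp θ hD'
  have hinv := hs.inv hsq.ne'
  have heq : (fun t => 1 / Real.sqrt (ri^2 + rj^2 - 2 * ri * rj * Real.cos t)) =
      fun t => (Real.sqrt (ri^2 + rj^2 - 2 * ri * rj * Real.cos t))⁻¹ := by
    funext t; rw [one_div]
  rw [heq]
  refine hinv.congr_deriv ?_
  rw [Gfun]
  rw [Real.sq_sqrt hD.le]
  field_simp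

lemma derivF_eq (ri rj : ℝ) (hi : 0 < ri) (hj : 0 < rj) (hne : ri ≠ rj) :
    deriv (fun t => 1 / Real.sqrt (ri^2 + rj^2 - 2 * ri * rj * Real.cos t)) = Gfun ri rj :=
  funext fun θ => (hasDerivAt_F ri rj hi hj hne θ).deriv

lemma hasDerivAt_G (ri rj : ℝ) (hi : 0 < ri) (hj : 0 < rj) (hne : ri ≠ rj) (θ : ℝ)
    (hs0 : Real.sin θ = 0) :
    HasDerivAt (Gfun ri rj)
      (-(ri * rj * Real.cos θ) /
        ((ri^2 + rj^2 - 2 * ri * rj * Real.cos θ) *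
          Real.sqrt (ri^2 + rj^2 - 2 * ri * rj * Real.cos θ))) θ := by
  have hD := Dpos ri rj hi hj hne θ
  have hsq : 0 < Real.sqrt (ri^2 + rj^2 - 2 * ri * rj * Real.cos θ) := Real.sqrt_pos.2 hD
  have hD' : HasDerivAt (fun t => ri^2 + rj^2 - 2 * ri * rj * Real.cos t)
      (2 * ri * rj * Real.sin θ) θ := by
    have h1 := (Real.hasDerivAt_cos θ).const_mul (2 * ri * rj)
    have h2 := (hasDerivAt_const θ (ri^2 + rj^2)).sub h1
    refine h2.congr_deriv ?_
    ring
  have hsrt : HasDerivAt (fun t => Real.sqrt (ri^2 + rj^2 - 2 * ri * rj * Real.cos t))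
      (1 / (2 * Real.sqrt (ri^2 + rj^2 - 2 * ri * rj * Real.cos θ)) * (2 * ri * rj * Real.sin θ)) θ :=
    (Real.hasDerivAt_sqrt hD.ne').comp θ hD'
  have hden := hD'.mul hsrt
  have hnum : HasDerivAt (fun t => -(ri * rj * Real.sin t)) (-(ri * rj * Real.cos θ)) θ :=
    ((Real.hasDerivAt_sin θ).const_mul (ri * rj)).neg
  have hdiv := hnum.div hden (mul_pos hD hsq).ne'
  refine hdiv.congr_deriv ?_
  rw [hs0]
  simp only [Pi.mul_apply, mul_zero, zero_mul, neg_zero, add_zero, sub_zero]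
  rw [pow_two (_ * _ : ℝ), mul_div_mul_right _ _ (mul_pos hD hsq).ne']

theorem stmt_8 (r1 r2 r3 : ℝ) (h1 : 0 < r1) (h12 : r1 < r2) (h23 : r2 < r3) :
    let F : ℝ → ℝ → ℝ → ℝ := fun ri rj θ =>
      1 / Real.sqrt (ri^2 + rj^2 - 2 * ri * rj * Real.cos θ)
    let f : ℝ → ℝ → ℝ := fun α β => F r1 r2 α + F r1 r3 β + F r2 r3 (α - β)
    let fαα : ℝ := deriv (fun a => deriv (fun a' => f a' 0) a) Real.pi
    let fββ : ℝ := deriv (fun b => deriv (fun b' => f Real.pi b') b) 0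
    let fαβ : ℝ := deriv (fun b => deriv (fun a => f a b) Real.pi) 0
    fαα * fββ - fαβ^2 =
      r1 * r2 * r3 * (r2 * (r3 - r1)^3 - r1 * (r3 + r2)^3 - r3 * (r1 + r2)^3) /
        ((r1 + r2)^3 * (r2 + r3)^3 * (r3 - r1)^3) := by
  intro F f fαα fββ fαβ
  have h2 : 0 < r2 := h1.trans h12
  have h3 : 0 < r3 := h2.trans h23
  have h13 : r1 < r3 := h12.trans h23
  have hne12 : r1 ≠ r2 := h12.ne
  have hne13 : r1 ≠ r3 := h13.ne
  have hne23 : r2 ≠ r3 := h23.ne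
  -- square root values at the three relevant points
  have hs12 : Real.sqrt (r1^2 + r2^2 - 2 * r1 * r2 * Real.cos Real.pi) = r1 + r2 := by
    rw [Real.cos_pi, show r1^2 + r2^2 - 2 * r1 * r2 * (-1) = (r1 + r2)^2 by ring,
      Real.sqrt_sq (by positivity)]
  have hs23 : Real.sqrt (r2^2 + r3^2 - 2 * r2 * r3 * Real.cos Real.pi) = r2 + r3 := by
    rw [Real.cos_pi, show r2^2 + r3^2 - 2 * r2 * r3 * (-1) = (r2 + r3)^2 by ring,
      Real.sqrt_sq (by positivity)]
  have hs13 : Real.sqrt (r1^2 + r3^2 - 2 * r1 * r3 * Real.cos 0) = r3 - r1 := by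
    rw [Real.cos_zero, show r1^2 + r3^2 - 2 * r1 * r3 * 1 = (r3 - r1)^2 by ring,
      Real.sqrt_sq (by linarith)]
  -- fαα
  have e1 : (fun a => deriv (fun a' => f a' 0) a) = fun a => Gfun r1 r2 a + Gfun r2 r3 a := by
    funext a
    have hf : (fun a' => f a' 0) = fun a' =>
        (1 / Real.sqrt (r1^2 + r2^2 - 2 * r1 * r2 * Real.cos a') +
          1 / Real.sqrt (r2^2 + r3^2 - 2 * r2 * r3 * Real.cos a')) +
        1 / Real.sqrt (r1^2 + r3^2 - 2 * r1 * r3 * Real.cos 0) := by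
      funext x; simp only [f, F, sub_zero]; ring
    rw [hf]
    exact (((hasDerivAt_F r1 r2 h1 h2 hne12 a).add
      (hasDerivAt_F r2 r3 h2 h3 hne23 a)).add_const _).deriv
  have hαα : fαα = r1 * r2 / (r1 + r2)^3 + r2 * r3 / (r2 + r3)^3 := by
    show deriv (fun a => deriv (fun a' => f a' 0) a) Real.pi = _
    rw [e1, HasDerivAt.deriv (f := fun a => Gfun r1 r2 a + Gfun r2 r3 a)
      ((hasDerivAt_G r1 r2 h1 h2 hne12 Real.pi Real.sin_pi).add
      (hasDerivAt_G r2 r3 h2 h3 hne23 Real.pi Real.sin_pi))]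
    rw [hs12, hs23, Real.cos_pi]
    rw [show r1^2 + r2^2 - 2 * r1 * r2 * (-1:ℝ) = (r1 + r2)^2 from by ring,
      show r2^2 + r3^2 - 2 * r2 * r3 * (-1:ℝ) = (r2 + r3)^2 from by ring]
    have hp12 : (0:ℝ) < r1 + r2 := by positivity
    have hp23 : (0:ℝ) < r2 + r3 := by positivity
    field_simp
  -- fββ
  have e2 : (fun b => deriv (fun b' => f Real.pi b') b) =
      fun b => Gfun r1 r3 b + Gfun r2 r3 (Real.pi - b) * (0 - 1) := by
    funext b
    have hf : (fun b' => f Real.pi b') = fun b' =>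
        (1 / Real.sqrt (r1^2 + r3^2 - 2 * r1 * r3 * Real.cos b') +
          1 / Real.sqrt (r2^2 + r3^2 - 2 * r2 * r3 * Real.cos (Real.pi - b'))) +
        1 / Real.sqrt (r1^2 + r2^2 - 2 * r1 * r2 * Real.cos Real.pi) := by
      funext x; simp only [f, F]; ring
    rw [hf]
    have hcomp : HasDerivAt
        (fun b' => 1 / Real.sqrt (r2^2 + r3^2 - 2 * r2 * r3 * Real.cos (Real.pi - b')))
        (Gfun r2 r3 (Real.pi - b) * (0 - 1)) b :=
      (hasDerivAt_F r2 r3 h2 h3 hne23 (Real.pi - b)).comp b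
        ((hasDerivAt_const b Real.pi).sub (hasDerivAt_id b))
    exact (((hasDerivAt_F r1 r3 h1 h3 hne13 b).add hcomp).add_const _).deriv
  have hββ : fββ = -(r1 * r3) / (r3 - r1)^3 + r2 * r3 / (r2 + r3)^3 := by
    show deriv (fun b => deriv (fun b' => f Real.pi b') b) 0 = _
    rw [e2]
    have hsπ0 : Real.sin (Real.pi - 0) = 0 := by rw [sub_zero]; exact Real.sin_pi
    have hG2 : HasDerivAt (fun b => Gfun r2 r3 (Real.pi - b))
        ((-(r2 * r3 * Real.cos (Real.pi - 0)) /
          ((r2^2 + r3^2 - 2 * r2 * r3 * Real.cos (Real.pi - 0)) *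
            Real.sqrt (r2^2 + r3^2 - 2 * r2 * r3 * Real.cos (Real.pi - 0)))) * (0 - 1)) 0 :=
      (hasDerivAt_G r2 r3 h2 h3 hne23 (Real.pi - 0) hsπ0).comp 0
        ((hasDerivAt_const 0 Real.pi).sub (hasDerivAt_id 0))
    rw [HasDerivAt.deriv (f := fun b => Gfun r1 r3 b + Gfun r2 r3 (Real.pi - b) * (0 - 1))
      ((hasDerivAt_G r1 r3 h1 h3 hne13 0 Real.sin_zero).add (hG2.mul_const (0 - 1)))]
    rw [sub_zero] at *
    rw [hs13, hs23, Real.cos_pi, Real.cos_zero,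
      show r1^2 + r3^2 - 2 * r1 * r3 * (1:ℝ) = (r3 - r1)^2 from by ring,
      show r2^2 + r3^2 - 2 * r2 * r3 * (-1:ℝ) = (r2 + r3)^2 from by ring]
    have hp13 : (0:ℝ) < r3 - r1 := by linarith
    have hp23 : (0:ℝ) < r2 + r3 := by positivity
    field_simp
    ring
  -- fαβ
  have e3 : (fun b => deriv (fun a => f a b) Real.pi) =
      fun b => Gfun r1 r2 Real.pi + Gfun r2 r3 (Real.pi - b) * 1 := by
    funext b
    have hf : (fun a => f a b) = fun a =>
        (1 / Real.sqrt (r1^2 + r2^2 - 2 * r1 * r2 * Real.cos a) +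
          1 / Real.sqrt (r2^2 + r3^2 - 2 * r2 * r3 * Real.cos (a - b))) +
        1 / Real.sqrt (r1^2 + r3^2 - 2 * r1 * r3 * Real.cos b) := by
      funext x; simp only [f, F]; ring
    rw [hf]
    have hcomp : HasDerivAt
        (fun a => 1 / Real.sqrt (r2^2 + r3^2 - 2 * r2 * r3 * Real.cos (a - b)))
        (Gfun r2 r3 (Real.pi - b) * 1) Real.pi := by
      have := (hasDerivAt_F r2 r3 h2 h3 hne23 (Real.pi - b)).comp Real.pi
        ((hasDerivAt_id Real.pi).sub_const b)
      exact this
    exact (((hasDerivAt_F r1 r2 h1 h2 hne12 Real.pi).add hcomp).add_const _).deriv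
  have hαβ : fαβ = -(r2 * r3 / (r2 + r3)^3) := by
    show deriv (fun b => deriv (fun a => f a b) Real.pi) 0 = _
    rw [e3]
    have hsπ0 : Real.sin (Real.pi - 0) = 0 := by rw [sub_zero]; exact Real.sin_pi
    have hG2 : HasDerivAt (fun b => Gfun r2 r3 (Real.pi - b))
        ((-(r2 * r3 * Real.cos (Real.pi - 0)) /
          ((r2^2 + r3^2 - 2 * r2 * r3 * Real.cos (Real.pi - 0)) *
            Real.sqrt (r2^2 + r3^2 - 2 * r2 * r3 * Real.cos (Real.pi - 0)))) * (0 - 1)) 0 :=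
      (hasDerivAt_G r2 r3 h2 h3 hne23 (Real.pi - 0) hsπ0).comp 0
        ((hasDerivAt_const 0 Real.pi).sub (hasDerivAt_id 0))
    rw [((hG2.mul_const 1).const_add (Gfun r1 r2 Real.pi)).deriv]
    rw [sub_zero] at *
    rw [hs23, Real.cos_pi,
      show r2^2 + r3^2 - 2 * r2 * r3 * (-1:ℝ) = (r2 + r3)^2 from by ring]
    have hp23 : (0:ℝ) < r2 + r3 := by positivity
    field_simp
    ring
  rw [hαα, hββ, hαβ]
  have hp12 : (0:ℝ) < r1 + r2 := by positivity
  have hp23 : (0:ℝ) < r2 + r3 := by positivity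
  have hp13 : (0:ℝ) < r3 - r1 := by linarith
  field_simp
  ring
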